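/- Let n ≥ 1, let r > 0, and let P := { z ∈ ℂⁿ : |z_k| < r for all k } be the open polydisc of polyradius r centered at the origin (the open ball of radius r for the supremum norm on Fin n → ℂ). Let f : ℂⁿ → ℂ be analytic on P and let i be a fixed index such that f(z) = 0 for every z ∈ P with z_i = 0. Then there exists a function g : ℂⁿ → ℂ analytic on P such that f(z) = z_i · g(z) for all z ∈ P. -/

import Mathlib

open scoped Topology ENNReal NNReal

namespace PolydiscDiv

variable {n : ℕ}

/-- The continuous linear map killing the `i`-th coordinate. -/
noncomputable def killCoord (i : Fin n) : (Fin n → ℂ) →L[ℂ] (Fin n → ℂ) :=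
  ContinuousLinearMap.pi (fun j => if j = i then 0 else ContinuousLinearMap.proj j)

lemma killCoord_apply (i : Fin n) (y : Fin n → ℂ) (j : Fin n) :
    killCoord i y j = if j = i then 0 else y j := by
  simp only [killCoord, ContinuousLinearMap.pi_apply]
  by_cases h : j = i <;> simp [h]

lemma killCoord_norm_le (i : Fin n) (y : Fin n → ℂ) : ‖killCoord i y‖ ≤ ‖y‖ := by
  refine (pi_norm_le_iff_of_nonneg (norm_nonneg y)).2 fun j => ?_
  rw [killCoord_apply]
  by_cases h : j = i
  · simp [h]
  · simpa [h] using norm_le_pi_norm y j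

lemma sub_killCoord (i : Fin n) (y : Fin n → ℂ) :
    y - killCoord i y = y i • (Pi.single i (1 : ℂ) : Fin n → ℂ) := by
  funext j
  simp only [Pi.sub_apply, killCoord_apply, Pi.smul_apply]
  by_cases h : j = i
  · subst h; simp
  · simp [h, Pi.single_eq_of_ne h]

/-- Key local divisibility lemma: near a point of the hyperplane `{z i = 0}` where `f` has a
power series and vanishes on the hyperplane, the quotient function is analytic. -/
theorem aux_div_analyticAt (i : Fin n) (f : (Fin n → ℂ) → ℂ)
    (p : Fin n → ℂ) (F : FormalMultilinearSeries ℂ (Fin n → ℂ) ℂ) (ρ : ℝ≥0∞) (δ : ℝ)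
    (hF : HasFPowerSeriesOnBall f F p ρ) (hpi : p i = 0) (hδ : 0 < δ)
    (hd : ∀ z ∈ Metric.ball p δ, DifferentiableAt ℂ f z)
    (hv : ∀ z ∈ Metric.ball p δ, z i = 0 → f z = 0) :
    AnalyticAt ℂ
      (fun z => if z i = 0 then deriv (fun w => f (Function.update z i w)) 0 else f z / z i) p := by
  classical
  set e : Fin n → ℂ := Pi.single i 1 with he
  have he_norm : ‖e‖ = 1 := by rw [he, Pi.norm_single, norm_one]
  set πL := killCoord i with hπL
  -- the candidate quotient power series
  set T : (m : ℕ) → Fin (m + 1) → ContinuousMultilinearMap ℂ (fun _ : Fin m => (Fin n → ℂ)) ℂ :=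
    fun m k =>
      ((((F (m + 1)).compContinuousLinearMap
          (fun j => if (j : ℕ) < (k : ℕ) then πL else ContinuousLinearMap.id ℂ _)).domDomCongr
        (Fin.cycleRange k)).curryLeft) e with hT
  set G : FormalMultilinearSeries ℂ (Fin n → ℂ) ℂ := fun m => ∑ k : Fin (m + 1), T m k with hG
  have hcons : ∀ (m : ℕ) (y : Fin n → ℂ) (t : Fin (m + 1)),
      (Fin.cons e (fun _ : Fin m => y) : Fin (m + 1) → (Fin n → ℂ)) t = if t = 0 then e else y := by
    intro m y t
    refine Fin.cases ?_ ?_ t <;> simp [Fin.succ_ne_zero]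
  have hcyc0 : ∀ (m : ℕ) (k j : Fin (m + 1)), Fin.cycleRange k j = 0 ↔ j = k := by
    intro m k j
    constructor
    · intro h
      exact (Fin.cycleRange k).injective (h.trans (Fin.cycleRange_self k).symm)
    · rintro rfl; exact Fin.cycleRange_self _
  -- diagonal values of `T`
  have hTdiag : ∀ (m : ℕ) (k : Fin (m + 1)) (y : Fin n → ℂ),
      T m k (fun _ => y) =
        F (m + 1) (fun j => if (j : ℕ) < (k : ℕ) then πL y else if j = k then e else y) := by
    intro m k y
    simp only [hT, ContinuousMultilinearMap.curryLeft_apply,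
      ContinuousMultilinearMap.domDomCongr_apply,
      ContinuousMultilinearMap.compContinuousLinearMap_apply]
    congr 1
    funext j
    rw [hcons m y (Fin.cycleRange k j)]
    by_cases h1 : (j : ℕ) < (k : ℕ)
    · have hjk : j ≠ k := by
        intro h; subst h; exact lt_irrefl _ h1
      have hne : ¬ Fin.cycleRange k j = 0 := fun h => hjk ((hcyc0 m k j).1 h)
      simp [h1, hne]
    · by_cases h2 : j = k
      · subst h2
        simp [h1, (hcyc0 m j j).2 rfl]
      · have hne : ¬ Fin.cycleRange k j = 0 := fun h => h2 ((hcyc0 m k j).1 h)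
        simp [h1, h2, hne]
  -- telescoping identity
  have hkey : ∀ (m : ℕ) (y : Fin n → ℂ),
      y i * G m (fun _ => y) =
        F (m + 1) (fun _ => y) - F (m + 1) (fun _ => πL y) := by
    intro m y
    set u : ℕ → Fin (m + 1) → (Fin n → ℂ) := fun t j => if (j : ℕ) < t then πL y else y with hu
    set v : ℕ → ℂ := fun t => F (m + 1) (u t) with hv'
    have hterm : ∀ k : Fin (m + 1),
        y i * T m k (fun _ => y) = v (k : ℕ) - v ((k : ℕ) + 1) := by
      intro k
      rw [hTdiag]
      have hw : (fun j : Fin (m + 1) => if (j : ℕ) < (k : ℕ) then πL y else if j = k then e else y)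
          = Function.update (u (k : ℕ)) k e := by
        funext j
        rcases eq_or_ne j k with rfl | h2
        · simp
        · simp [Function.update_of_ne h2, h2, hu]
      rw [hw]
      have e1 : F (m + 1) (Function.update (u (k : ℕ)) k (y i • e))
          = y i • F (m + 1) (Function.update (u (k : ℕ)) k e) :=
        (F (m + 1)).map_update_smul _ _ _ _
      have e2 : Function.update (u (k : ℕ)) k (y i • e)
          = Function.update (u (k : ℕ)) k (y - πL y) := by
        rw [hπL, sub_killCoord, ← he]
      have e3 : F (m + 1) (Function.update (u (k : ℕ)) k (y - πL y))
          = F (m + 1) (Function.update (u (k : ℕ)) k y)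
            - F (m + 1) (Function.update (u (k : ℕ)) k (πL y)) :=
        (F (m + 1)).map_update_sub _ _ _ _
      have e4 : Function.update (u (k : ℕ)) k y = u (k : ℕ) := by
        funext j
        rcases eq_or_ne j k with rfl | h2
        · simp [hu]
        · rw [Function.update_of_ne h2]
      have e5 : Function.update (u (k : ℕ)) k (πL y) = u ((k : ℕ) + 1) := by
        funext j
        rcases eq_or_ne j k with rfl | h2
        · simp [hu, Nat.lt_succ_self]
        · rw [Function.update_of_ne h2]
          have hjk : (j : ℕ) ≠ (k : ℕ) := fun h => h2 (Fin.ext h)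
          simp only [hu]
          by_cases h3 : (j : ℕ) < (k : ℕ)
          · simp [h3, Nat.lt_succ_of_lt h3]
          · have h4 : ¬ (j : ℕ) < (k : ℕ) + 1 := by omega
            simp [h3, h4]
      have e6 : y i * F (m + 1) (Function.update (u (k : ℕ)) k e)
          = F (m + 1) (Function.update (u (k : ℕ)) k (y i • e)) := by
        rw [e1]; simp [smul_eq_mul]
      rw [e6, e2, e3, e4, e5]
    have hsum : G m (fun _ => y) = ∑ k : Fin (m + 1), T m k (fun _ => y) := by
      rw [hG]
      exact ContinuousMultilinearMap.sum_apply _ _ _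
    rw [hsum, Finset.mul_sum]
    have hsum2 : ∑ k : Fin (m + 1), (y i * T m k (fun _ => y))
        = ∑ k : Fin (m + 1), (v (k : ℕ) - v ((k : ℕ) + 1)) :=
      Finset.sum_congr rfl (fun k _ => hterm k)
    rw [hsum2, Fin.sum_univ_eq_sum_range (fun t => v t - v (t + 1)) (m + 1),
      Finset.sum_range_sub' v (m + 1)]
    have hv0 : v 0 = F (m + 1) (fun _ => y) := by
      have hu0 : u 0 = fun _ => y := by funext j; simp [hu]
      simp only [hv']
      rw [hu0]
    have hvm : v (m + 1) = F (m + 1) (fun _ => πL y) := by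
      have hum : u (m + 1) = fun _ => πL y := by
        funext j; simp [hu, j.isLt, Nat.lt_succ_of_lt]
      simp only [hv']
      rw [hum]
    rw [hv0, hvm]
  -- norm bound for T
  have hTnorm : ∀ (m : ℕ) (k : Fin (m + 1)), ‖T m k‖ ≤ ‖F (m + 1)‖ := by
    intro m k
    refine ContinuousMultilinearMap.opNorm_le_bound (norm_nonneg _) (fun v => ?_)
    have hval : T m k v = F (m + 1)
        (fun j => (if (j : ℕ) < (k : ℕ) then πL else ContinuousLinearMap.id ℂ _)
          ((Fin.cons e v : Fin (m + 1) → (Fin n → ℂ)) (Fin.cycleRange k j))) := by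
      simp only [hT, ContinuousMultilinearMap.curryLeft_apply,
        ContinuousMultilinearMap.domDomCongr_apply,
        ContinuousMultilinearMap.compContinuousLinearMap_apply]
    rw [hval]
    have step1 : ∀ j : Fin (m + 1),
        ‖(if (j : ℕ) < (k : ℕ) then πL else ContinuousLinearMap.id ℂ _)
          ((Fin.cons e v : Fin (m + 1) → (Fin n → ℂ)) (Fin.cycleRange k j))‖
        ≤ ‖(Fin.cons e v : Fin (m + 1) → (Fin n → ℂ)) (Fin.cycleRange k j)‖ := by
      intro j
      by_cases h : (j : ℕ) < (k : ℕ)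
      · simpa [h, hπL] using killCoord_norm_le i _
      · simp [h]
    calc ‖F (m + 1) (fun j => (if (j : ℕ) < (k : ℕ) then πL else ContinuousLinearMap.id ℂ _)
          ((Fin.cons e v : Fin (m + 1) → (Fin n → ℂ)) (Fin.cycleRange k j)))‖
        ≤ ‖F (m + 1)‖ * ∏ j : Fin (m + 1), ‖(if (j : ℕ) < (k : ℕ) then πL else ContinuousLinearMap.id ℂ _)
            ((Fin.cons e v : Fin (m + 1) → (Fin n → ℂ)) (Fin.cycleRange k j))‖ :=
          (F (m + 1)).le_opNorm _
      _ ≤ ‖F (m + 1)‖ * ∏ j : Fin (m + 1), ‖(Fin.cons e v : Fin (m + 1) → (Fin n → ℂ)) (Fin.cycleRange k j)‖ :=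
          mul_le_mul_of_nonneg_left
            (Finset.prod_le_prod (fun j _ => norm_nonneg _) (fun j _ => step1 j)) (norm_nonneg _)
      _ = ‖F (m + 1)‖ * ∏ j : Fin (m + 1), ‖(Fin.cons e v : Fin (m + 1) → (Fin n → ℂ)) j‖ := by
          rw [Equiv.prod_comp (Fin.cycleRange k)
            (fun t => ‖(Fin.cons e v : Fin (m + 1) → (Fin n → ℂ)) t‖)]
      _ = ‖F (m + 1)‖ * ∏ j : Fin m, ‖v j‖ := by
          rw [Fin.prod_univ_succ]
          simp [he_norm]
  have hGnorm : ∀ m : ℕ, ‖G m‖ ≤ (m + 1) * ‖F (m + 1)‖ := by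
    intro m
    calc ‖G m‖ ≤ ∑ k : Fin (m + 1), ‖T m k‖ := norm_sum_le _ _
      _ ≤ ∑ _k : Fin (m + 1), ‖F (m + 1)‖ := Finset.sum_le_sum (fun k _ => hTnorm m k)
      _ = (m + 1) * ‖F (m + 1)‖ := by
          simp [Finset.sum_const, Finset.card_univ, nsmul_eq_mul]
  -- choice of radii
  obtain ⟨εn, hεn0, hεnlt⟩ : ∃ εn : ℝ≥0, (0 : ℝ≥0∞) < εn ∧ (εn : ℝ≥0∞) < min ρ (ENNReal.ofReal δ) := by
    have hpos : (0 : ℝ≥0∞) < min ρ (ENNReal.ofReal δ) :=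
      lt_min hF.r_pos (by simpa using hδ)
    obtain ⟨q, hq1, hq2⟩ := ENNReal.lt_iff_exists_nnreal_btwn.1 hpos
    exact ⟨q, hq1, hq2⟩
  have hεnρ : (εn : ℝ≥0∞) < ρ := hεnlt.trans_le (min_le_left _ _)
  have hεnδ : (εn : ℝ) < δ := by
    have h1 := hεnlt.trans_le (min_le_right _ _)
    rw [← ENNReal.ofReal_coe_nnreal] at h1
    exact (ENNReal.ofReal_lt_ofReal_iff_of_nonneg εn.coe_nonneg).1 h1
  have hεpos : (0 : ℝ) < (εn : ℝ) := by
    have := ENNReal.coe_pos.1 hεn0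
    exact_mod_cast this
  obtain ⟨C, hC0, hCb⟩ := F.norm_mul_pow_le_of_lt_radius (hεnρ.trans_le hF.r_le)
  set r' : ℝ≥0 := εn / 2 with hr'
  have hr'R : (r' : ℝ) = (εn : ℝ) / 2 := by rw [hr']; push_cast; ring
  have hr'posR : (0 : ℝ) < (r' : ℝ) := by rw [hr'R]; linarith
  have hr'εn : (r' : ℝ) ≤ (εn : ℝ) := by rw [hr'R]; linarith
  have hradius : (r' : ℝ≥0∞) ≤ G.radius := by
    refine G.le_radius_of_bound (2 * C / (εn : ℝ)) (fun m => ?_)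
    have h1 : ‖G m‖ * ((r' : ℝ)) ^ m ≤ ((m + 1) * ‖F (m + 1)‖) * (((εn : ℝ)) / 2) ^ m := by
      rw [hr'R]
      exact mul_le_mul_of_nonneg_right (hGnorm m) (by positivity)
    refine h1.trans ?_
    rw [div_pow]
    have hFb := hCb (m + 1)
    have h3 : ((m : ℝ) + 1) ≤ 2 * 2 ^ m := by
      have h := (Nat.lt_two_pow_self (n := m + 1)).le
      have h' : ((m : ℝ) + 1) ≤ 2 ^ (m + 1) := by exact_mod_cast h
      calc ((m : ℝ) + 1) ≤ 2 ^ (m + 1) := h'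
        _ = 2 * 2 ^ m := by ring
    have h4 : ‖F (m + 1)‖ * (εn : ℝ) ^ m ≤ C / (εn : ℝ) := by
      rw [le_div_iff₀ hεpos]
      calc ‖F (m + 1)‖ * (εn : ℝ) ^ m * (εn : ℝ) = ‖F (m + 1)‖ * (εn : ℝ) ^ (m + 1) := by ring
        _ ≤ C := hFb
    calc ((m : ℝ) + 1) * ‖F (m + 1)‖ * ((εn : ℝ) ^ m / 2 ^ m)
        = (((m : ℝ) + 1) / 2 ^ m) * (‖F (m + 1)‖ * (εn : ℝ) ^ m) := by ring
      _ ≤ 2 * (C / (εn : ℝ)) := by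
          apply mul_le_mul ?_ h4 (by positivity) (by norm_num)
          rw [div_le_iff₀ (by positivity)]
          linarith
      _ = 2 * C / (εn : ℝ) := by ring
  set S := G.sum with hS
  have hmemG : ∀ y : Fin n → ℂ, ‖y‖ < (r' : ℝ) → y ∈ Metric.eball (0 : Fin n → ℂ) G.radius := by
    intro y hy
    rw [mem_emetric_ball_zero_iff]
    refine lt_of_lt_of_le ?_ hradius
    exact_mod_cast hy
  have hSsum : ∀ y : Fin n → ℂ, ‖y‖ < (r' : ℝ) → HasSum (fun m => G m (fun _ => y)) (S y) :=
    fun y hy => G.hasSum (hmemG y hy)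
  have hFsum : ∀ y : Fin n → ℂ, ‖y‖ < (εn : ℝ) →
      HasSum (fun m => F m (fun _ => y)) (f (p + y)) := by
    intro y hy
    apply hF.hasSum
    rw [mem_emetric_ball_zero_iff]
    refine lt_trans ?_ hεnρ
    exact_mod_cast hy
  have hπmem : ∀ y : Fin n → ℂ, ‖y‖ < (εn : ℝ) → f (p + πL y) = 0 := by
    intro y hy
    have hmem : p + πL y ∈ Metric.ball p δ := by
      rw [Metric.mem_ball, dist_eq_norm, add_sub_cancel_left]
      exact lt_of_le_of_lt (by rw [hπL]; exact killCoord_norm_le i y) (lt_trans hy hεnδ)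
    have hzero : (p + πL y) i = 0 := by
      simp [hπL, killCoord_apply, hpi]
    exact hv _ hmem hzero
  -- S equals f/z_i off the hyperplane
  have hdiv : ∀ y : Fin n → ℂ, ‖y‖ < (r' : ℝ) → y i ≠ 0 → S y = (y i)⁻¹ * f (p + y) := by
    intro y hy hyi
    have hyε : ‖y‖ < (εn : ℝ) := lt_of_lt_of_le hy hr'εn
    have h1 := hFsum y hyε
    have h2 := hFsum (πL y) (lt_of_le_of_lt (by rw [hπL]; exact killCoord_norm_le i y) hyε)
    rw [hπmem y hyε] at h2
    have h3 := h1.sub h2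
    have h4 : HasSum (fun m => F (m + 1) (fun _ => y) - F (m + 1) (fun _ => πL y)) (f (p + y)) := by
      have h5 := (hasSum_nat_add_iff'
        (f := fun m => F m (fun _ => y) - F m (fun _ => πL y)) 1).2 h3
      have h6 : (fun _ : Fin 0 => y) = (fun _ : Fin 0 => πL y) := funext (fun j => j.elim0)
      simpa [Finset.sum_range_one, h6] using h5
    have hfun : (fun m => F (m + 1) (fun _ => y) - F (m + 1) (fun _ => πL y))
        = fun m => y i * G m (fun _ => y) := funext fun m => (hkey m y).symm
    rw [hfun] at h4
    have h8 := h4.mul_left (y i)⁻¹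
    have h9 : (fun m => (y i)⁻¹ * (y i * G m (fun _ => y))) = fun m => G m (fun _ => y) := by
      funext m; rw [inv_mul_cancel_left₀ hyi]
    rw [h9] at h8
    exact (hSsum y hy).unique h8
  -- S equals the derivative on the hyperplane
  have hslice : ∀ y : Fin n → ℂ, ‖y‖ < (r' : ℝ) / 2 → y i = 0 →
      S y = deriv (fun w => f (Function.update (p + y) i w)) 0 := by
    intro y hy hyi
    have hymem : p + y ∈ Metric.ball p δ := by
      rw [Metric.mem_ball, dist_eq_norm, add_sub_cancel_left]
      have : ‖y‖ < (r' : ℝ) := lt_trans hy (by linarith)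
      linarith [lt_of_lt_of_le this hr'εn, hεnδ]
    have hpyi : (p + y) i = 0 := by simp [hpi, hyi]
    have hupd : ∀ w : ℂ, Function.update (p + y) i w = p + y + w • e := by
      intro w; funext j
      rcases eq_or_ne j i with rfl | h
      · simp [Function.update_self, hpyi, he]
      · simp [Function.update_of_ne h, he, Pi.single_eq_of_ne h]
    set φ : ℂ → ℂ := fun w => f (Function.update (p + y) i w) with hφ
    have hφw : ∀ w, φ w = f (p + y + w • e) := fun w => by rw [hφ]; simp only [hupd w]
    have hφ0 : φ 0 = 0 := by
      have := hv (p + y) hymem hpyi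
      rw [hφw]; simpa using this
    have hφdiff : DifferentiableAt ℂ φ 0 := by
      have hφeq : φ = f ∘ (fun w : ℂ => p + y + w • e) := funext hφw
      rw [hφeq]
      have h1 : DifferentiableAt ℂ (fun w : ℂ => p + y + w • e) 0 :=
        (differentiableAt_id.smul_const e).const_add _
      have h2 : DifferentiableAt ℂ f ((fun w : ℂ => p + y + w • e) 0) := by
        simpa using hd _ hymem
      exact h2.comp 0 h1
    have hder := hφdiff.hasDerivAt
    have T2 := hasDerivAt_iff_tendsto_slope.mp hder
    have hev : ∀ᶠ w in 𝓝[≠] (0 : ℂ), slope φ 0 w = S (y + w • e) := by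
      have hball : ∀ᶠ w in 𝓝 (0 : ℂ), ‖w‖ < (r' : ℝ) / 2 := by
        have hmem := Metric.ball_mem_nhds (0 : ℂ) (half_pos hr'posR)
        filter_upwards [hmem] with w hw
        simpa [mem_ball_zero_iff] using hw
      refine ((hball.filter_mono nhdsWithin_le_nhds).and eventually_mem_nhdsWithin).mono ?_
      rintro w ⟨hwn, hw⟩
      have hw0 : w ≠ 0 := hw
      have hwy : ‖y + w • e‖ < (r' : ℝ) := by
        calc ‖y + w • e‖ ≤ ‖y‖ + ‖w • e‖ := norm_add_le _ _
          _ = ‖y‖ + ‖w‖ := by rw [norm_smul, he_norm, mul_one]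
          _ < (r' : ℝ) / 2 + (r' : ℝ) / 2 := by exact add_lt_add hy hwn
          _ = (r' : ℝ) := by ring
      have hwi : (y + w • e) i = w := by simp [hyi, he]
      have hdv := hdiv (y + w • e) hwy (by rw [hwi]; exact hw0)
      rw [hdv, hwi, slope_def_field, hφ0, sub_zero, sub_zero, div_eq_inv_mul]
      congr 1
      rw [hφw w, ← add_assoc]
    have T1 : Filter.Tendsto (fun w => S (y + w • e)) (𝓝[≠] (0 : ℂ)) (𝓝 (S y)) := by
      have hScont : ContinuousAt S y := by
        have h1 : ContinuousOn S (EMetric.ball 0 G.radius) := FormalMultilinearSeries.continuousOn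
        exact h1.continuousAt (EMetric.isOpen_ball.mem_nhds
          (hmemG y (lt_trans hy (by linarith))))
      have hinc : Continuous (fun w : ℂ => y + w • e) :=
        continuous_const.add (continuous_id.smul continuous_const)
      have hin : Filter.Tendsto (fun w : ℂ => y + w • e) (𝓝 0) (𝓝 y) := by
        have h3 := hinc.tendsto (0 : ℂ)
        simpa using h3
      exact (hScont.tendsto.comp hin).mono_left nhdsWithin_le_nhds
    have T2' : Filter.Tendsto (fun w => S (y + w • e)) (𝓝[≠] (0 : ℂ)) (𝓝 (deriv φ 0)) :=
      Filter.Tendsto.congr' hev T2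
    exact tendsto_nhds_unique T1 T2'
  -- assemble
  have hradpos : (0 : ℝ≥0∞) < G.radius := by
    refine lt_of_lt_of_le ?_ hradius
    exact_mod_cast hr'posR
  have hSan : AnalyticAt ℂ S 0 := (G.hasFPowerSeriesOnBall hradpos).analyticAt
  have hinner : AnalyticAt ℂ (fun z : Fin n → ℂ => z - p) p := analyticAt_id.sub analyticAt_const
  have hcomp : AnalyticAt ℂ (fun z => S (z - p)) p := by
    have h0 : AnalyticAt ℂ S ((fun z : Fin n → ℂ => z - p) p) := by simpa using hSan
    have hcompo := AnalyticAt.comp (g := S) (f := fun z : Fin n → ℂ => z - p) h0 hinner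
    exact hcompo
  refine hcomp.congr ?_
  have hball2 : Metric.ball p ((r' : ℝ) / 2) ∈ 𝓝 p := Metric.ball_mem_nhds _ (half_pos hr'posR)
  filter_upwards [hball2] with z hz
  have hzy : ‖z - p‖ < (r' : ℝ) / 2 := by rwa [Metric.mem_ball, dist_eq_norm] at hz
  have hpz : p + (z - p) = z := by ring
  by_cases h : z i = 0
  · have hyi : (z - p) i = 0 := by simp [h, hpi]
    have hsl := hslice (z - p) hzy hyi
    rw [hpz] at hsl
    simp only [h, if_pos]
    exact hsl
  · have hyi : (z - p) i ≠ 0 := by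
      simpa [hpi, sub_eq_zero] using h
    have hdv := hdiv (z - p) (lt_trans hzy (by linarith)) hyi
    rw [hpz] at hdv
    simp only [if_neg h]
    rw [hdv]
    have : (z - p) i = z i := by simp [hpi]
    rw [this, div_eq_inv_mul]

end PolydiscDiv

/-- Divisibility by a coordinate on a polydisc: if `f` is analytic on the open polydisc
`P = {z : |z_k| < r for all k}` and vanishes on the slice `{z_i = 0} ∩ P`, then there
is a function `g` analytic on `P` with `f(z) = z_i · g(z)` on `P`. -/
theorem analytic_divisible_by_coordinate
    (n : ℕ) (hn : 1 ≤ n) (r : ℝ) (hr : 0 < r)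
    (f : (Fin n → ℂ) → ℂ) (i : Fin n)
    (P : Set (Fin n → ℂ))
    (hP : P = {z : Fin n → ℂ | ∀ k : Fin n, ‖z k‖ < r})
    (hf : AnalyticOnNhd ℂ f P)
    (hvanish : ∀ z ∈ P, z i = 0 → f z = 0) :
    ∃ g : (Fin n → ℂ) → ℂ, AnalyticOnNhd ℂ g P ∧ ∀ z ∈ P, f z = z i * g z := by
  subst hP
  have hPopen : IsOpen {z : Fin n → ℂ | ∀ k : Fin n, ‖z k‖ < r} := by
    have hrw : {z : Fin n → ℂ | ∀ k : Fin n, ‖z k‖ < r}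
        = ⋂ k : Fin n, {z : Fin n → ℂ | ‖z k‖ < r} := by
      ext z; simp [Set.mem_iInter]
    rw [hrw]
    exact isOpen_iInter_of_finite fun k =>
      isOpen_lt (continuous_norm.comp (continuous_apply k)) continuous_const
  refine ⟨fun z => if z i = 0 then deriv (fun w => f (Function.update z i w)) 0 else f z / z i,
    fun p hp => ?_, fun z hz => ?_⟩
  · by_cases hpi : p i = 0
    · obtain ⟨F, hF1⟩ := hf p hp
      obtain ⟨ρ, hFb⟩ := hF1
      obtain ⟨δ, hδ, hball⟩ := Metric.isOpen_iff.mp hPopen p hp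
      exact PolydiscDiv.aux_div_analyticAt i f p F ρ δ hFb hpi hδ
        (fun z hz => (hf z (hball hz)).differentiableAt)
        (fun z hz h0 => hvanish z (hball hz) h0)
    · have hopen : IsOpen {z : Fin n → ℂ | z i ≠ 0} :=
        IsOpen.preimage (continuous_apply i) isOpen_compl_singleton
      have hev : ∀ᶠ z in 𝓝 p, z i ≠ 0 :=
        Filter.eventually_of_mem (hopen.mem_nhds hpi) (fun z hz => hz)
      have han : AnalyticAt ℂ (fun z : Fin n → ℂ => f z / z i) p := by
        refine (hf p hp).div ?_ hpi
        exact (ContinuousLinearMap.proj i : (Fin n → ℂ) →L[ℂ] ℂ).analyticAt p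
      refine han.congr ?_
      filter_upwards [hev] with z hz
      simp [hz]
  · by_cases h : z i = 0
    · simp [h, hvanish z hz h]
    · simp only [if_neg h]
      field_simp
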